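/- Let μ be a Borel probability measure on ℝ with 0 < μ([0,∞)) < 1 and ∫ e^{εb²} μ(db) < ∞ for some ε > 0. For fixed t > 0, define π(t,x) = ∫_{[0,∞)} e^{bx - b²t/2} μ(db) / ∫_ℝ e^{bx - b²t/2} μ(db). Then x ↦ π(t,x) is a strictly increasing continuous bijection from ℝ onto (0,1). -/

import Mathlib

open MeasureTheory Real Set

/-- The posterior probability `π(t,x)` that the drift lies in `S`, under the
exponentially tilted measure `μ_{t,x}(db) = e^{bx - b²t/2} μ(db) / normalizer`. -/
noncomputable def tiltProb (μ : Measure ℝ) (t x : ℝ) (S : Set ℝ) : ℝ :=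
  (∫ b in S, Real.exp (b * x - b ^ 2 * t / 2) ∂μ) /
  (∫ b, Real.exp (b * x - b ^ 2 * t / 2) ∂μ)

open Filter Topology

private lemma tilt_exponent_le {t : ℝ} (ht : 0 < t) {M : ℝ} (b x : ℝ) (hx : |x| ≤ M) :
    b * x - b ^ 2 * t / 2 ≤ M ^ 2 / (2 * t) := by
  have hbx : b * x ≤ |b| * M := by
    calc b * x ≤ |b * x| := le_abs_self _
    _ = |b| * |x| := abs_mul b x
    _ ≤ |b| * M := mul_le_mul_of_nonneg_left hx (abs_nonneg b)
  rw [le_div_iff₀ (by positivity : (0:ℝ) < 2 * t)]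
  have key : 2 * t * (|b| * M) ≤ |b| ^ 2 * t ^ 2 + M ^ 2 := by
    nlinarith [sq_nonneg (|b| * t - M)]
  rw [sq_abs] at key
  have h3 : 2 * t * (b * x) ≤ 2 * t * (|b| * M) :=
    mul_le_mul_of_nonneg_left hbx (by positivity : (0:ℝ) ≤ 2 * t)
  nlinarith [key, h3]

private lemma tilt_cont_b (t x : ℝ) :
    Continuous (fun b : ℝ => Real.exp (b * x - b ^ 2 * t / 2)) := by fun_prop

private lemma tilt_cont_x (t b : ℝ) :
    Continuous (fun x : ℝ => Real.exp (b * x - b ^ 2 * t / 2)) := by fun_prop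

private lemma tilt_integrable (μ : Measure ℝ) [IsFiniteMeasure μ] {t : ℝ} (ht : 0 < t) (x : ℝ) :
    Integrable (fun b => Real.exp (b * x - b ^ 2 * t / 2)) μ := by
  refine (integrable_const (Real.exp (|x| ^ 2 / (2 * t)))).mono'
    ((tilt_cont_b t x).aestronglyMeasurable) ?_
  filter_upwards with b
  rw [Real.norm_eq_abs, Real.abs_exp]
  exact Real.exp_le_exp.mpr (tilt_exponent_le ht b x le_rfl)

private lemma tilt_setIntegral_pos (μ : Measure ℝ) [IsFiniteMeasure μ] {t : ℝ} (ht : 0 < t)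
    (x : ℝ) {s : Set ℝ} (hμs : 0 < μ s) :
    0 < ∫ b in s, Real.exp (b * x - b ^ 2 * t / 2) ∂μ := by
  rw [setIntegral_pos_iff_support_of_nonneg_ae
    (Eventually.of_forall fun b => (Real.exp_pos _).le)
    ((tilt_integrable μ ht x).integrableOn)]
  have hsupp : Function.support (fun b : ℝ => Real.exp (b * x - b ^ 2 * t / 2)) = Set.univ := by
    ext b; simp [Function.mem_support, (Real.exp_pos _).ne']
  rw [hsupp, Set.univ_inter]
  exact hμs

private lemma tilt_tendsto_nhds (μ : Measure ℝ) [IsFiniteMeasure μ] {t : ℝ} (ht : 0 < t)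
    (x0 : ℝ) :
    Tendsto (fun x => ∫ b, Real.exp (b * x - b ^ 2 * t / 2) ∂μ) (𝓝 x0)
      (𝓝 (∫ b, Real.exp (b * x0 - b ^ 2 * t / 2) ∂μ)) := by
  apply tendsto_integral_filter_of_dominated_convergence
    (fun _ => Real.exp ((|x0| + 1) ^ 2 / (2 * t)))
  · exact Eventually.of_forall fun x => (tilt_cont_b t x).aestronglyMeasurable
  · have h1 : ∀ᶠ x in 𝓝 x0, x ∈ Icc (x0 - 1) (x0 + 1) :=
      Icc_mem_nhds (by linarith) (by linarith)
    filter_upwards [h1] with x hx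
    filter_upwards with b
    rw [Real.norm_eq_abs, Real.abs_exp]
    apply Real.exp_le_exp.mpr
    apply tilt_exponent_le ht
    rw [abs_le]
    constructor
    · have := neg_abs_le x0; have := hx.1; linarith
    · have := le_abs_self x0; have := hx.2; linarith
  · exact integrable_const _
  · filter_upwards with b
    exact (tilt_cont_x t b).tendsto x0

private lemma tilt_tendsto_zero (μ : Measure ℝ) [IsFiniteMeasure μ] {t : ℝ} (ht : 0 < t) :
    Tendsto (fun x => ∫ b in Iio (0:ℝ), Real.exp (b * x - b ^ 2 * t / 2) ∂μ) atTop (𝓝 0) := by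
  have h := tendsto_integral_filter_of_dominated_convergence (μ := μ.restrict (Iio 0)) (l := (atTop : Filter ℝ))
      (F := fun (x : ℝ) (b : ℝ) => Real.exp (b * x - b ^ 2 * t / 2)) (f := fun _ => (0:ℝ))
      (fun _ => (1:ℝ))
      (Eventually.of_forall fun x => (tilt_cont_b t x).aestronglyMeasurable)
      ?_ (integrable_const _) ?_
  · simpa using h
  · filter_upwards [eventually_ge_atTop (0:ℝ)] with x hx
    refine (ae_restrict_iff' measurableSet_Iio).2 (Eventually.of_forall fun b hb => ?_)
    rw [Real.norm_eq_abs, Real.abs_exp]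
    rw [Real.exp_le_one_iff]
    have hb' : b < 0 := hb
    nlinarith [mul_nonneg (neg_nonneg.2 hb'.le) hx, mul_nonneg (sq_nonneg b) ht.le]
  · refine (ae_restrict_iff' measurableSet_Iio).2 (Eventually.of_forall fun b hb => ?_)
    have hb' : b < 0 := hb
    have h1 : Tendsto (fun x : ℝ => b * x - b ^ 2 * t / 2) atTop atBot := by
      apply tendsto_atBot_add_const_right
      exact tendsto_id.const_mul_atTop_of_neg hb'
    exact Real.tendsto_exp_atBot.comp h1

private lemma tilt_exists_delta (μ : Measure ℝ) (h : 0 < μ (Iio (0:ℝ))) :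
    ∃ δ : ℝ, 0 < δ ∧ 0 < μ (Iic (-δ)) := by
  by_contra hc
  push_neg at hc
  have h0 : ∀ n : ℕ, μ (Iic (-(1/(n+1)))) = 0 := fun n =>
    le_antisymm (hc (1/(n+1)) (by positivity)) (zero_le)
  have hsub : Iio (0:ℝ) ⊆ ⋃ n : ℕ, Iic (-(1/(n+1:ℝ))) := by
    intro b hb
    have hb' : (0:ℝ) < -b := by simp only [mem_Iio] at hb; linarith
    simp only [mem_iUnion, mem_Iic]
    obtain ⟨n, hn⟩ := exists_nat_gt (1 / (-b))
    refine ⟨n, ?_⟩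
    rw [div_lt_iff₀ hb'] at hn
    have h2 : (1:ℝ)/(n+1) ≤ -b := by
      rw [div_le_iff₀ (by positivity)]
      nlinarith
    linarith
  have : μ (Iio (0:ℝ)) = 0 :=
    measure_mono_null hsub (measure_iUnion_null fun n => h0 n)
  exact h.ne' this

theorem stmt_2 (μ : Measure ℝ) [IsProbabilityMeasure μ]
    (hμ0 : 0 < μ (Set.Ici (0:ℝ))) (hμ1 : μ (Set.Ici (0:ℝ)) < 1)
    (ε : ℝ) (hε : 0 < ε)
    (hexp : Integrable (fun b => Real.exp (ε * b ^ 2)) μ)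
    (t : ℝ) (ht : 0 < t) :
    StrictMono (fun x => tiltProb μ t x (Set.Ici 0)) ∧
    Continuous (fun x => tiltProb μ t x (Set.Ici 0)) ∧
    Set.range (fun x => tiltProb μ t x (Set.Ici 0)) = Set.Ioo 0 1 := by
  have hIio : 0 < μ (Iio (0:ℝ)) := by
    have hcompl := measure_compl (μ := μ) (s := Ici (0:ℝ)) measurableSet_Ici (measure_ne_top μ _)
    rw [compl_Ici] at hcompl
    rw [hcompl, measure_univ]
    exact tsub_pos_of_lt hμ1
  have hint : ∀ x, Integrable (fun b => Real.exp (b * x - b ^ 2 * t / 2)) μ :=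
    fun x => tilt_integrable μ ht x
  set N : ℝ → ℝ := fun x => ∫ b in Ici (0:ℝ), Real.exp (b * x - b ^ 2 * t / 2) ∂μ with hN
  set Q : ℝ → ℝ := fun x => ∫ b in Iio (0:ℝ), Real.exp (b * x - b ^ 2 * t / 2) ∂μ with hQ
  have hDeq : ∀ x, (∫ b, Real.exp (b * x - b ^ 2 * t / 2) ∂μ) = N x + Q x := fun x => by
    rw [hN, hQ]
    rw [← compl_Ici (a := (0:ℝ))]
    exact (integral_add_compl measurableSet_Ici (hint x)).symm
  have hNpos : ∀ x, 0 < N x := fun x => tilt_setIntegral_pos μ ht x hμ0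
  have hQpos : ∀ x, 0 < Q x := fun x => tilt_setIntegral_pos μ ht x hIio
  have hπ : ∀ x, tiltProb μ t x (Set.Ici 0) = N x / (N x + Q x) := fun x => by
    rw [tiltProb, hDeq x]
  -- monotonicity facts
  have hNm : ∀ x y : ℝ, x ≤ y → N x ≤ N y := by
    intro x y hxy
    refine setIntegral_mono_on (hint x).integrableOn (hint y).integrableOn
      measurableSet_Ici (fun b hb => ?_)
    have hb' : (0:ℝ) ≤ b := hb
    exact Real.exp_le_exp.mpr (by nlinarith)
  have hQm : ∀ x y : ℝ, x < y → Q y < Q x := by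
    intro x y hxy
    have hin : IntegrableOn
        (fun b => Real.exp (b * x - b ^ 2 * t / 2) - Real.exp (b * y - b ^ 2 * t / 2))
        (Iio (0:ℝ)) μ := ((hint x).integrableOn).sub ((hint y).integrableOn)
    have key : 0 < ∫ b in Iio (0:ℝ),
        (Real.exp (b * x - b ^ 2 * t / 2) - Real.exp (b * y - b ^ 2 * t / 2)) ∂μ := by
      rw [setIntegral_pos_iff_support_of_nonneg_ae ?_ hin]
      · have hsub : Iio (0:ℝ) ⊆ Function.support
            (fun b => Real.exp (b * x - b ^ 2 * t / 2) - Real.exp (b * y - b ^ 2 * t / 2)) := by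
          intro b hb
          have hb' : b < 0 := hb
          have hlt : Real.exp (b * y - b ^ 2 * t / 2) < Real.exp (b * x - b ^ 2 * t / 2) :=
            Real.exp_lt_exp.mpr (by nlinarith [mul_lt_mul_of_neg_left hxy hb'])
          simp only [Function.mem_support]
          exact sub_ne_zero.mpr hlt.ne'
        rw [Set.inter_eq_right.mpr hsub]
        exact hIio
      · refine (ae_restrict_iff' measurableSet_Iio).2 (Eventually.of_forall fun b hb => ?_)
        have hb' : b < 0 := hb
        have hle : Real.exp (b * y - b ^ 2 * t / 2) ≤ Real.exp (b * x - b ^ 2 * t / 2) :=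
          Real.exp_le_exp.mpr (by nlinarith [mul_lt_mul_of_neg_left hxy hb'])
        exact sub_nonneg.mpr hle
    rw [integral_sub (hint x).integrableOn (hint y).integrableOn] at key
    rw [hQ]
    linarith
  have hmono : StrictMono (fun x => tiltProb μ t x (Set.Ici 0)) := by
    intro x y hxy
    simp only [hπ]
    rw [div_lt_div_iff₀ (by have := hNpos x; have := hQpos x; linarith)
      (by have := hNpos y; have := hQpos y; linarith)]
    nlinarith [hNpos x, hNpos y, hQpos x, hQpos y, hNm x y hxy.le, hQm x y hxy]
  have hcont : Continuous (fun x => tiltProb μ t x (Set.Ici 0)) := by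
    rw [continuous_iff_continuousAt]
    intro x0
    have hDc := tilt_tendsto_nhds μ ht x0
    have hNc := tilt_tendsto_nhds (μ.restrict (Ici (0:ℝ))) ht x0
    have hD0 : (∫ b, Real.exp (b * x0 - b ^ 2 * t / 2) ∂μ) ≠ 0 := by
      rw [hDeq x0]
      have := hNpos x0; have := hQpos x0; linarith
    have : Tendsto (fun x => tiltProb μ t x (Set.Ici 0)) (𝓝 x0)
        (𝓝 (tiltProb μ t x0 (Set.Ici 0))) := by
      simp only [tiltProb]
      exact hNc.div hDc hD0
    exact this
  -- limit at +∞
  have hQ0 : Tendsto Q atTop (𝓝 0) := tilt_tendsto_zero μ ht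
  have htop : Tendsto (fun x => tiltProb μ t x (Set.Ici 0)) atTop (𝓝 1) := by
    have h2 : Tendsto (fun x => Q x / (N x + Q x)) atTop (𝓝 0) := by
      apply squeeze_zero' (g := fun x => Q x / N 0)
      · exact Eventually.of_forall fun x =>
          div_nonneg (hQpos x).le (by have := hNpos x; have := hQpos x; linarith)
      · filter_upwards [eventually_ge_atTop (0:ℝ)] with x hx
        apply div_le_div_of_nonneg_left (hQpos x).le (hNpos 0)
        have := hNm 0 x hx; have := hQpos x; linarith
      · simpa using hQ0.div_const (N 0)
    have h3 : ∀ x, tiltProb μ t x (Set.Ici 0) = 1 - Q x / (N x + Q x) := by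
      intro x
      rw [hπ x, eq_sub_iff_add_eq, ← add_div, div_self]
      have := hNpos x; have := hQpos x; linarith
    have h4 : Tendsto (fun x => 1 - Q x / (N x + Q x)) atTop (𝓝 1) := by
      have := tendsto_const_nhds (x := (1:ℝ)) (f := atTop (α := ℝ))
      simpa using this.sub h2
    exact h4.congr fun x => (h3 x).symm
  -- limit at -∞
  obtain ⟨δ, hδ, hμδ⟩ := tilt_exists_delta μ hIio
  have hc : 0 < ∫ b in Iic (-δ), Real.exp (b * 0 - b ^ 2 * t / 2) ∂μ :=
    tilt_setIntegral_pos μ ht 0 hμδ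
  set c : ℝ := ∫ b in Iic (-δ), Real.exp (b * 0 - b ^ 2 * t / 2) ∂μ with hcdef
  have hQlow : ∀ x ≤ (0:ℝ), Real.exp (-δ * x) * c ≤ Q x := by
    intro x hx
    have step1 : Real.exp (-δ * x) * c
        = ∫ b in Iic (-δ), Real.exp (-δ * x) * Real.exp (b * 0 - b ^ 2 * t / 2) ∂μ :=
      (integral_const_mul _ _).symm
    have step2 : (∫ b in Iic (-δ), Real.exp (-δ * x) * Real.exp (b * 0 - b ^ 2 * t / 2) ∂μ)
        ≤ ∫ b in Iic (-δ), Real.exp (b * x - b ^ 2 * t / 2) ∂μ := by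
      refine setIntegral_mono_on ((tilt_integrable μ ht 0).integrableOn.const_mul _)
        (hint x).integrableOn measurableSet_Iic (fun b hb => ?_)
      have hb' : b ≤ -δ := hb
      rw [← Real.exp_add]
      apply Real.exp_le_exp.mpr
      nlinarith [mul_nonneg (by linarith : (0:ℝ) ≤ -(b + δ)) (by linarith : (0:ℝ) ≤ -x)]
    have step3 : (∫ b in Iic (-δ), Real.exp (b * x - b ^ 2 * t / 2) ∂μ) ≤ Q x := by
      refine setIntegral_mono_set (hint x).integrableOn
        (Eventually.of_forall fun b => (Real.exp_pos _).le) ?_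
      exact HasSubset.Subset.eventuallyLE (fun b hb => by
        simp only [mem_Iic] at hb; simp only [mem_Iio]; linarith)
    calc Real.exp (-δ * x) * c
        = _ := step1
      _ ≤ _ := step2
      _ ≤ Q x := step3
  have hbot : Tendsto (fun x => tiltProb μ t x (Set.Ici 0)) atBot (𝓝 0) := by
    apply squeeze_zero' (g := fun x => (Real.exp (-δ * x) * c)⁻¹)
    · exact Eventually.of_forall fun x => by
        rw [hπ x]
        exact (div_pos (hNpos x) (by have := hNpos x; have := hQpos x; linarith)).le
    · filter_upwards [eventually_le_atBot (0:ℝ)] with x hx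
      have hN1 : N x ≤ 1 := by
        have hle : N x ≤ ∫ _ in Ici (0:ℝ), (1:ℝ) ∂μ := by
          refine setIntegral_mono_on (hint x).integrableOn
            (integrable_const _).integrableOn measurableSet_Ici (fun b hb => ?_)
          have hb' : (0:ℝ) ≤ b := hb
          rw [Real.exp_le_one_iff]
          nlinarith [mul_nonneg (sq_nonneg b) ht.le, mul_nonneg hb' (by linarith : (0:ℝ) ≤ -x)]
        have h1 : (∫ _ in Ici (0:ℝ), (1:ℝ) ∂μ) = (μ (Ici (0:ℝ))).toReal • (1:ℝ) :=
          setIntegral_const 1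
        have h2 : (μ (Ici (0:ℝ))).toReal ≤ 1 := by
          have := ENNReal.toReal_mono (by simp) (prob_le_one (μ := μ) (s := Ici (0:ℝ)))
          simpa using this
        rw [h1] at hle
        simpa using hle.trans (by simpa using h2)
      rw [hπ x, ← one_div]
      apply div_le_div₀ zero_le_one hN1 (by positivity)
      have := hQlow x hx; have := hNpos x; linarith
    · apply Tendsto.comp tendsto_inv_atTop_zero
      apply Tendsto.atTop_mul_const hc
      apply Real.tendsto_exp_atTop.comp
      exact tendsto_id.const_mul_atBot_of_neg (by linarith : -δ < 0)
  refine ⟨hmono, hcont, ?_⟩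
  apply Set.Subset.antisymm
  · rintro _ ⟨x, rfl⟩
    constructor
    · show 0 < tiltProb μ t x (Set.Ici 0)
      rw [hπ x]
      exact div_pos (hNpos x) (by have := hNpos x; have := hQpos x; linarith)
    · show tiltProb μ t x (Set.Ici 0) < 1
      rw [hπ x, div_lt_one (by have := hNpos x; have := hQpos x; linarith)]
      have := hQpos x; linarith
  · rintro y ⟨hy0, hy1⟩
    obtain ⟨a, ha⟩ := (hbot.eventually_lt_const hy0).exists
    obtain ⟨b, hb⟩ := (htop.eventually_const_lt hy1).exists
    have hab : a < b := by
      by_contra hab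
      push_neg at hab
      have := hmono.le_iff_le.mpr hab
      linarith
    have hiv := intermediate_value_Icc hab.le (hcont.continuousOn (s := Icc a b))
    have hy : y ∈ Icc (tiltProb μ t a (Set.Ici 0)) (tiltProb μ t b (Set.Ici 0)) := ⟨ha.le, hb.le⟩
    obtain ⟨x, _, hx⟩ := hiv hy
    exact ⟨x, hx⟩
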